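/- Let a, M, θ ∈ ℝ, c = a cos θ, Σ(r) = r² + c², Δ(r) = r² - 2Mr + a², and ρ(r) = -1/(r - i c), ρ̄ = conj(ρ). Then for all r with Σ(r) ≠ 0: ρ ρ̄ (ρ + ρ̄) · (a² sin²θ / 2) + (M/2)(ρ² + ρ̄²) = (1/2) d/dr [ Δ(r)/Σ(r) ]. -/

import Mathlib

open Complex

/-- Kerr optical scalar ρ(r) = -1/(r - i c). -/
noncomputable def rhoK (c : ℝ) (r : ℝ) : ℂ := -1 / ((r : ℂ) - c * Complex.I)

/-- Complex conjugate ρ̄. -/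
noncomputable def rhoKbar (c : ℝ) (r : ℝ) : ℂ := (starRingEnd ℂ) (rhoK c r)

/-- the GHP commutator coefficient identity on Kerr. -/
theorem stmt11 (a M θ : ℝ) (r : ℝ)
    (hSig : r ^ 2 + (a * Real.cos θ) ^ 2 ≠ 0) :
    rhoK (a * Real.cos θ) r * rhoKbar (a * Real.cos θ) r *
        (rhoK (a * Real.cos θ) r + rhoKbar (a * Real.cos θ) r) *
        ((a ^ 2 * Real.sin θ ^ 2 / 2 : ℝ) : ℂ) +
      ((M : ℂ) / 2) * ((rhoK (a * Real.cos θ) r) ^ 2 + (rhoKbar (a * Real.cos θ) r) ^ 2) =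
      ((1 / 2 * deriv (fun s : ℝ =>
          (s ^ 2 - 2 * M * s + a ^ 2) / (s ^ 2 + (a * Real.cos θ) ^ 2)) r : ℝ) : ℂ) := by
  set c : ℝ := a * Real.cos θ with hc
  -- compute the derivative
  have hnum : HasDerivAt (fun s : ℝ => s ^ 2 - 2 * M * s + a ^ 2) (2 * r - 2 * M) r := by
    have h1 : HasDerivAt (fun s : ℝ => s ^ 2) (2 * r) r := by
      simpa using (hasDerivAt_pow 2 r)
    have h2 : HasDerivAt (fun s : ℝ => 2 * M * s) (2 * M) r := by
      simpa using (hasDerivAt_id r).const_mul (2 * M)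
    simpa using (h1.sub h2).add_const (a ^ 2)
  have hden : HasDerivAt (fun s : ℝ => s ^ 2 + c ^ 2) (2 * r) r := by
    have h1 : HasDerivAt (fun s : ℝ => s ^ 2) (2 * r) r := by
      simpa using (hasDerivAt_pow 2 r)
    simpa using h1.add_const (c ^ 2)
  have hdiv := hnum.div hden hSig
  have hderiv : deriv (fun s : ℝ =>
      (s ^ 2 - 2 * M * s + a ^ 2) / (s ^ 2 + c ^ 2)) r
      = ((2 * r - 2 * M) * (r ^ 2 + c ^ 2) - (r ^ 2 - 2 * M * r + a ^ 2) * (2 * r)) /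
        (r ^ 2 + c ^ 2) ^ 2 := hdiv.deriv
  rw [hderiv]
  -- nonvanishing facts in ℂ
  have h1 : (r : ℂ) - (c : ℂ) * Complex.I ≠ 0 := by
    intro h
    apply hSig
    have hre := congrArg Complex.re h
    have him := congrArg Complex.im h
    simp at hre him
    simp [hre, him]
  have h2 : (r : ℂ) + (c : ℂ) * Complex.I ≠ 0 := by
    intro h
    apply hSig
    have hre := congrArg Complex.re h
    have him := congrArg Complex.im h
    simp at hre him
    simp [hre, him]
  have hSc : ((r : ℝ) ^ 2 + c ^ 2 : ℝ) ≠ 0 := hSig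
  have hScC : ((r : ℂ) ^ 2 + (c : ℂ) ^ 2) ≠ 0 := by
    exact_mod_cast hSc
  have hsin : Complex.sin (θ : ℂ) ^ 2 = 1 - Complex.cos (θ : ℂ) ^ 2 := by
    linear_combination Complex.sin_sq_add_cos_sq (θ : ℂ)
  have hI2 : Complex.I ^ 2 = -1 := Complex.I_sq
  rw [rhoK, rhoKbar, rhoK]
  simp only [map_div₀, map_neg, map_one, map_sub, map_mul, Complex.conj_I,
    Complex.conj_ofReal]
  push_cast [hc] at h1 h2 hScC ⊢
  rw [hsin]
  set x : ℂ := (a : ℂ) * Complex.cos (θ : ℂ) with hx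
  set A : ℂ := (r : ℂ) - x * Complex.I with hA
  have hB : (r : ℂ) - x * -Complex.I = (r : ℂ) + x * Complex.I := by ring
  rw [hB]
  set B : ℂ := (r : ℂ) + x * Complex.I with hBdef
  have hAB : A * B = (r : ℂ) ^ 2 + x ^ 2 := by
    rw [hA, hBdef]; linear_combination (-(x ^ 2)) * hI2
  have hsum : A + B = 2 * (r : ℂ) := by rw [hA, hBdef]; ring
  have hsq : A ^ 2 + B ^ 2 = 2 * (r : ℂ) ^ 2 - 2 * x ^ 2 := by
    rw [hA, hBdef]; linear_combination (2 * x ^ 2) * hI2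
  clear hA hBdef hB
  clear_value A B
  have key : -1 / A * (-1 / B) * (-1 / A + -1 / B) * ((a : ℂ) ^ 2 * (1 - Complex.cos (θ : ℂ) ^ 2) / 2) +
      (M : ℂ) / 2 * ((-1 / A) ^ 2 + (-1 / B) ^ 2) =
      ((M : ℂ) / 2 * (A ^ 2 + B ^ 2) - ((a : ℂ) ^ 2 * (1 - Complex.cos (θ : ℂ) ^ 2) / 2) * (A + B)) /
        (A * B) ^ 2 := by
    set s : ℂ := (a : ℂ) ^ 2 * (1 - Complex.cos (θ : ℂ) ^ 2) / 2 with hs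
    clear_value s
    have e1 : -1 / A * (-1 / B) * (-1 / A + -1 / B) * s = (-(s * (A + B))) / (A * B) ^ 2 := by
      field_simp
      ring
    have e2 : (M : ℂ) / 2 * ((-1 / A) ^ 2 + (-1 / B) ^ 2) =
        ((M : ℂ) / 2 * (A ^ 2 + B ^ 2)) / (A * B) ^ 2 := by
      rw [neg_div, neg_sq, neg_div, neg_sq, div_pow, div_pow, one_pow,
        div_add_div _ _ (pow_ne_zero 2 h1) (pow_ne_zero 2 h2), mul_pow]
      ring_nf
    rw [e1, e2, ← add_div]
    ring_nf
  rw [key, hAB, hsum, hsq, hx]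
  have hS : ((r : ℂ) ^ 2 + ((a : ℂ) * Complex.cos (θ : ℂ)) ^ 2) ≠ 0 := hScC
  field_simp
  ring
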